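/- Let B ⊂ ℝ^m be compact and Ω of finite measure. Every extreme point of the set of Young measures Y(Ω;B) is composed of Dirac measures: if ν ∈ Y(Ω;B) is extreme, then there exists a measurable u : Ω → B such that ν_x = δ_{u(x)} for a.e. x ∈ Ω. Conversely, every such Dirac-type Young measure is an extreme point of Y(Ω;B). -/

import Mathlib

open MeasureTheory
open scoped BoundedContinuousFunction ENNReal NNReal

/-- Young measures: weakly* measurable families of probability measures on compact `B ⊂ ℝ^m`. -/
def IsYoungMeasure {α : Type*} [MeasurableSpace α] (μ : Measure α)
    {m : ℕ} (B : Set (Fin m → ℝ)) (ν : α → Measure B) : Prop :=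
  (∀ g : B →ᵇ ℝ, Measurable fun x => ∫ z, g z ∂(ν x)) ∧
    ∀ᵐ x ∂μ, IsProbabilityMeasure (ν x)

/-- `ν` is an extreme point of the convex set `Y(Ω;B)` of Young measures: whenever
`ν = ½ ν₁ + ½ ν₂` (a.e. in `x`) with `ν₁, ν₂ ∈ Y(Ω;B)`, necessarily `ν₁ = ν₂` a.e. -/
def IsExtremeYoungMeasure {α : Type*} [MeasurableSpace α] (μ : Measure α)
    {m : ℕ} (B : Set (Fin m → ℝ)) (ν : α → Measure B) : Prop :=
  IsYoungMeasure μ B ν ∧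
    ∀ ν₁ ν₂ : α → Measure B, IsYoungMeasure μ B ν₁ → IsYoungMeasure μ B ν₂ →
      (∀ᵐ x ∂μ, ν x = (2⁻¹ : ENNReal) • ν₁ x + (2⁻¹ : ENNReal) • ν₂ x) →
      ∀ᵐ x ∂μ, ν₁ x = ν₂ x

lemma aux_eq_dirac_of_singleton {X : Type*} [MeasurableSpace X] [MeasurableSingletonClass X]
    (p : Measure X) [IsProbabilityMeasure p] {a : X} (h : p {a} = 1) :
    p = Measure.dirac a := by
  have hc : p {a}ᶜ = 0 := by
    have h2 := measure_add_measure_compl (μ := p) (measurableSet_singleton a)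
    rw [h, measure_univ] at h2
    exact (ENNReal.add_right_inj (a := 1) (by simp)).mp (by simpa using h2)
  ext s hs
  rw [Measure.dirac_apply' a hs]
  by_cases has : a ∈ s
  · have h1 : p s ≤ 1 := prob_le_one
    have h2 : (1 : ℝ≥0∞) ≤ p s := h ▸ measure_mono (Set.singleton_subset_iff.mpr has)
    simp [Set.indicator_of_mem has, le_antisymm h1 h2]
  · have hsub : s ⊆ {a}ᶜ := fun z hz => by
      simp only [Set.mem_compl_iff, Set.mem_singleton_iff]
      rintro rfl; exact has hz
    simp [Set.indicator_of_notMem has,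
      le_antisymm ((measure_mono hsub).trans_eq hc) zero_le]

lemma aux_eq_dirac_of_half {X : Type*} [MeasurableSpace X] [MeasurableSingletonClass X]
    (p q : Measure X) [IsProbabilityMeasure p] [IsProbabilityMeasure q] {a : X}
    (h : Measure.dirac a = (2⁻¹ : ℝ≥0∞) • p + (2⁻¹ : ℝ≥0∞) • q) :
    p = Measure.dirac a := by
  have hcm : MeasurableSet ({a}ᶜ : Set X) := (measurableSet_singleton a).compl
  have h0 : (2⁻¹ : ℝ≥0∞) * p {a}ᶜ + (2⁻¹ : ℝ≥0∞) * q {a}ᶜ = 0 := by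
    have := congrArg (fun μ : Measure X => μ {a}ᶜ) h
    simpa [Measure.add_apply, Measure.smul_apply, smul_eq_mul,
      Measure.dirac_apply' a hcm] using this.symm
  have hpc : p {a}ᶜ = 0 := by
    rcases add_eq_zero.mp h0 with ⟨h1, -⟩
    simpa using (mul_eq_zero.mp h1).resolve_left (by simp)
  have hp1 : p {a} = 1 := by
    have h2 := measure_add_measure_compl (μ := p) (measurableSet_singleton a)
    rwa [hpc, add_zero, measure_univ] at h2
  exact aux_eq_dirac_of_singleton p hp1

theorem extremeYoungMeasure_iff_dirac
    {α : Type*} [MeasurableSpace α] (μ : Measure α) [IsFiniteMeasure μ]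
    {m : ℕ} (B : Set (Fin m → ℝ)) (hB : IsCompact B) (hBne : B.Nonempty)
    (ν : α → Measure B) (hν : IsYoungMeasure μ B ν) :
    IsExtremeYoungMeasure μ B ν ↔
      ∃ u : α → B, Measurable u ∧ ∀ᵐ x ∂μ, ν x = Measure.dirac (u x) := by
  classical
  haveI : CompactSpace B := isCompact_iff_compactSpace.mp hB
  constructor
  · rintro ⟨-, hext⟩
    obtain ⟨N, hTN, hNmeas, hNnull⟩ :=
      exists_measurable_superset_of_null (ae_iff.mp hν.2)
    have hNae : ∀ᵐ x ∂μ, x ∉ N := by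
      rw [ae_iff]; simpa using hNnull
    have hNprob : ∀ x ∉ N, IsProbabilityMeasure (ν x) := by
      intro x hx; by_contra h; exact hx (hTN h)
    set F : Fin m → (B →ᵇ ℝ) := fun i =>
      BoundedContinuousFunction.mkOfCompact
        ⟨fun z => (z : Fin m → ℝ) i, (continuous_apply i).comp continuous_subtype_val⟩ with hF
    set b : α → Fin m → ℝ := fun x i => ∫ z, F i z ∂(ν x) with hb
    have hbmeas : Measurable b := measurable_pi_lambda _ fun i => hν.1 (F i)
    have key : ∀ i : Fin m, ∀ᵐ x ∂μ, x ∉ N → ∀ᵐ z ∂(ν x), F i z = b x i := by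
      intro i
      set f : B →ᵇ ℝ := F i with hf
      set C : ℝ := ‖f‖ + 1 with hC
      have hCpos : (0 : ℝ) < C := by positivity
      set ε : ℝ := (2 * C)⁻¹ with hε
      have hεpos : (0 : ℝ) < ε := by positivity
      set β : α → ℝ := fun x => max (-C) (min C (b x i)) with hβ
      have hβmeas : Measurable β :=
        measurable_const.max (measurable_const.min (hν.1 (F i)))
      have hβle : ∀ x, |β x| ≤ C := fun x =>
        abs_le.mpr ⟨le_max_left _ _, max_le (by linarith) (min_le_left _ _)⟩
      have hfle : ∀ z : B, |f z| ≤ C := fun z => by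
        have := f.norm_coe_le_norm z
        rw [Real.norm_eq_abs] at this
        linarith
      -- the density
      set dens : ℝ → α → B → ℝ := fun e x z => 1 + e * (f z - β x) with hdens
      have hdensnn : ∀ (e : ℝ), |e| ≤ ε → ∀ x z, 0 ≤ dens e x z := by
        intro e he x z
        have h1 : |e * (f z - β x)| ≤ 1 := by
          rw [abs_mul]
          have h2 : |f z - β x| ≤ 2 * C :=
            (abs_sub _ _).trans (by linarith [hfle z, hβle x])
          calc |e| * |f z - β x| ≤ ε * (2 * C) := by
                apply mul_le_mul he h2 (abs_nonneg _) hεpos.le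
            _ = 1 := by rw [hε]; field_simp
        have := (abs_le.mp h1).1
        simp only [hdens]; linarith
      set ρ : ℝ → α → B → ℝ≥0 := fun e x z => Real.toNNReal (dens e x z) with hρ
      have hρmeas : ∀ e x, Measurable (fun z => ρ e x z) := by
        intro e x
        apply (continuous_real_toNNReal.comp ?_).measurable
        exact continuous_const.add (continuous_const.mul (f.continuous.sub continuous_const))
      have hρcoe : ∀ (e : ℝ), |e| ≤ ε → ∀ x z, ((ρ e x z : ℝ≥0) : ℝ) = dens e x z :=
        fun e he x z => Real.coe_toNNReal _ (hdensnn e he x z)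
      set νP : ℝ → α → Measure B := fun e x =>
        if x ∈ N then ν x else (ν x).withDensity (fun z => ((ρ e x z : ℝ≥0) : ℝ≥0∞)) with hνP
      have hint : ∀ (e : ℝ), |e| ≤ ε → ∀ (g : B →ᵇ ℝ), ∀ x ∉ N,
          ∫ z, g z ∂(νP e x)
            = ∫ z, g z ∂(ν x) + e * ∫ z, (f * g) z ∂(ν x)
              - e * β x * ∫ z, g z ∂(ν x) := by
        intro e he g x hx
        haveI := hNprob x hx
        simp only [hνP, if_neg hx]
        rw [integral_withDensity_eq_integral_smul (hρmeas e x)]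
        have heq : ∀ z : B, ρ e x z • g z
            = g z + e * ((f * g) z) - (e * β x) * g z := by
          intro z
          rw [NNReal.smul_def, hρcoe e he x z, smul_eq_mul]
          simp only [hdens, BoundedContinuousFunction.coe_mul, Pi.mul_apply]
          ring
        calc ∫ z, ρ e x z • g z ∂(ν x)
            = ∫ z, (g z + e * ((f * g) z) - (e * β x) * g z) ∂(ν x) := by
              simp only [heq]
          _ = _ := by
              have I1 : Integrable (fun z : B => g z + e * ((f * g) z)) (ν x) := by
                exact (g.integrable _).add (((f * g).integrable _).const_mul e)
              have I2 : Integrable (fun z : B => (e * β x) * g z) (ν x) :=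
                (g.integrable _).const_mul (e * β x)
              have I3 : Integrable (fun z : B => e * ((f * g) z)) (ν x) :=
                ((f * g).integrable _).const_mul e
              rw [integral_sub I1 I2, integral_add (g.integrable _) I3,
                integral_const_mul, integral_const_mul]
      have hβeq : ∀ x ∉ N, β x = b x i := by
        intro x hx
        haveI := hNprob x hx
        have h1 : |b x i| ≤ ‖f‖ := by
          have := f.norm_integral_le_norm (μ := ν x)
          rw [Real.norm_eq_abs] at this
          exact this
        have h2 : |b x i| ≤ C := by rw [hC]; linarith
        rw [hβ]
        simp only
        rw [min_eq_right (abs_le.mp h2).2, max_eq_right (abs_le.mp h2).1]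
      have hbint : ∀ x, ∫ z, f z ∂(ν x) = b x i := fun x => rfl
      have hdensint : ∀ x (e : ℝ), Integrable (fun z : B => dens e x z) (ν x) →
          True := fun _ _ _ => trivial
      have hprob : ∀ (e : ℝ), |e| ≤ ε → ∀ x ∉ N, IsProbabilityMeasure (νP e x) := by
        intro e he x hx
        haveI := hNprob x hx
        constructor
        simp only [hνP, if_neg hx]
        rw [withDensity_apply _ MeasurableSet.univ, Measure.restrict_univ]
        have hinteg : Integrable (fun z : B => dens e x z) (ν x) := by
          simp only [hdens]
          exact (integrable_const 1).add
            (((f.integrable _).sub (integrable_const (β x))).const_mul e)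
        have hrw : (fun z : B => ((ρ e x z : ℝ≥0) : ℝ≥0∞))
            = fun z => ENNReal.ofReal (dens e x z) := rfl
        rw [hrw, ← ofReal_integral_eq_lintegral_ofReal hinteg
          (Filter.Eventually.of_forall (hdensnn e he x))]
        have hval : ∫ z, dens e x z ∂(ν x) = 1 := by
          simp only [hdens]
          have hsubI : Integrable (fun z : B => f z - β x) (ν x) := by
            exact (f.integrable _).sub (integrable_const (β x))
          rw [integral_add (integrable_const 1) (hsubI.const_mul e),
            integral_const_mul,
            integral_sub (f.integrable _) (integrable_const (β x)),
            integral_const, integral_const, hbint x, hβeq x hx]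
          simp [measure_univ]
        rw [hval]
        simp
      have habs : |ε| ≤ ε := le_of_eq (abs_of_pos hεpos)
      have habs' : |(-ε)| ≤ ε := by rw [abs_neg]; exact habs
      have hYoung : ∀ (e : ℝ), |e| ≤ ε → IsYoungMeasure μ B (νP e) := by
        intro e he
        constructor
        · intro g
          have hrw : (fun x => ∫ z, g z ∂(νP e x)) = fun x =>
              if x ∈ N then ∫ z, g z ∂(ν x)
              else ∫ z, g z ∂(ν x) + e * ∫ z, (f * g) z ∂(ν x)
                - e * β x * ∫ z, g z ∂(ν x) := by
            funext x
            by_cases hx : x ∈ N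
            · simp only [hνP, if_pos hx]
            · rw [if_neg hx]; exact hint e he g x hx
          rw [hrw]
          exact Measurable.ite hNmeas (hν.1 g)
            (((hν.1 g).add ((hν.1 (f * g)).const_mul e)).sub
              ((hβmeas.const_mul e).mul (hν.1 g)))
        · filter_upwards [hNae] with x hx
          exact hprob e he x hx
      have hmid : ∀ᵐ x ∂μ, ν x = (2⁻¹ : ℝ≥0∞) • νP ε x + (2⁻¹ : ℝ≥0∞) • νP (-ε) x := by
        filter_upwards [hNae] with x hx
        simp only [hνP, if_neg hx]
        rw [← withDensity_smul _ (hρmeas ε x).coe_nnreal_ennreal,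
          ← withDensity_smul _ (hρmeas (-ε) x).coe_nnreal_ennreal,
          ← withDensity_add_right _ ((hρmeas (-ε) x).coe_nnreal_ennreal.const_smul _)]
        have hone : ((2⁻¹ : ℝ≥0∞) • fun z : B => ((ρ ε x z : ℝ≥0) : ℝ≥0∞))
            + ((2⁻¹ : ℝ≥0∞) • fun z : B => ((ρ (-ε) x z : ℝ≥0) : ℝ≥0∞)) = 1 := by
          funext z
          simp only [Pi.add_apply, Pi.smul_apply, Pi.one_apply, smul_eq_mul]
          have h1 : (0 : ℝ) ≤ dens ε x z := hdensnn ε habs x z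
          have h2 : (0 : ℝ) ≤ dens (-ε) x z := hdensnn (-ε) habs' x z
          have hsum : dens ε x z + dens (-ε) x z = 2 := by simp only [hdens]; ring
          show (2⁻¹ : ℝ≥0∞) * ENNReal.ofReal (dens ε x z)
            + (2⁻¹ : ℝ≥0∞) * ENNReal.ofReal (dens (-ε) x z) = 1
          rw [← mul_add, ← ENNReal.ofReal_add h1 h2, hsum, ENNReal.ofReal_ofNat]
          exact ENNReal.inv_mul_cancel (by norm_num) (by norm_num)
        rw [hone, withDensity_one]
      have hae := hext (νP ε) (νP (-ε)) (hYoung ε habs) (hYoung (-ε) habs') hmid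
      filter_upwards [hae, hNae] with x hxe hxN
      intro _
      haveI := hNprob x hxN
      have hfml := hint ε habs f x hxN
      have hfml' := hint (-ε) habs' f x hxN
      rw [hxe, hfml'] at hfml
      have hvar : ∫ z, (f * f) z ∂(ν x) = β x * ∫ z, f z ∂(ν x) := by
        have hε0 : ε ≠ 0 := ne_of_gt hεpos
        have h3 : ε * (∫ z, (f * f) z ∂(ν x))
            = ε * (β x * ∫ z, f z ∂(ν x)) := by nlinarith [hfml]
        exact mul_left_cancel₀ hε0 h3
      have hzero : ∫ z, (f z - b x i)^2 ∂(ν x) = 0 := by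
        have hexp : (fun z : B => (f z - b x i)^2)
            = fun z => ((f * f) z - (2 * b x i) * f z) + (b x i)^2 := by
          funext z
          simp only [BoundedContinuousFunction.coe_mul, Pi.mul_apply]
          ring
        have J1 : Integrable (fun z : B => (f * f) z - (2 * b x i) * f z) (ν x) := by
          exact ((f * f).integrable _).sub ((f.integrable _).const_mul _)
        have J2 : Integrable (fun z : B => (2 * b x i) * f z) (ν x) :=
          (f.integrable _).const_mul _
        rw [hexp, integral_add J1 (integrable_const _),
          integral_sub ((f * f).integrable _) J2,
          integral_const_mul, integral_const, hvar, hβeq x hxN, hbint x]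
        simp only [measure_univ, probReal_univ, ENNReal.toReal_one, one_smul]
        ring
      set g0 : B →ᵇ ℝ := f - BoundedContinuousFunction.const B (b x i) with hg0
      have hint2 : Integrable (fun z : B => (f z - b x i)^2) (ν x) := by
        have h4 := (g0 * g0).integrable (ν x)
        exact h4.congr (ae_of_all _ fun z => by simp [hg0, pow_two])
      have haez := (integral_eq_zero_iff_of_nonneg
        (fun z => sq_nonneg (f z - b x i)) hint2).mp hzero
      filter_upwards [haez] with z hz
      have h5 : (f z - b x i)^2 = 0 := hz
      have h6 : f z - b x i = 0 := by
        have := sq_eq_zero_iff.mp h5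
        exact this
      have : f z = b x i := by linarith
      exact this
    have hkey : ∀ᵐ x ∂μ, ∃ h : b x ∈ B, ν x = Measure.dirac (⟨b x, h⟩ : B) := by
      have hall : ∀ᵐ x ∂μ, ∀ i : Fin m, x ∉ N → ∀ᵐ z ∂(ν x), F i z = b x i :=
        ae_all_iff.mpr key
      filter_upwards [hNae, hall] with x hxN hx
      haveI := hNprob x hxN
      have hz : ∀ᵐ (z : B) ∂(ν x), (z : Fin m → ℝ) = b x := by
        have h2 : ∀ᵐ z ∂(ν x), ∀ i, F i z = b x i := ae_all_iff.mpr fun i => hx i hxN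
        filter_upwards [h2] with z hz2
        funext i
        exact hz2 i
      set S : Set B := {z : B | (z : Fin m → ℝ) = b x} with hS
      have hSmeas : MeasurableSet S :=
        measurable_subtype_coe (measurableSet_singleton (b x))
      have hSc : ν x Sᶜ = 0 := by
        rw [ae_iff] at hz
        simpa [hS, Set.compl_setOf] using hz
      have hS1 : ν x S = 1 := by
        have h3 := measure_add_measure_compl (μ := ν x) hSmeas
        rwa [hSc, add_zero, measure_univ] at h3
      obtain ⟨z₀, hz₀⟩ : S.Nonempty :=
        nonempty_of_measure_ne_zero (by rw [hS1]; exact one_ne_zero)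
      have hbB : b x ∈ B := by rw [← hz₀]; exact z₀.2
      refine ⟨hbB, ?_⟩
      have hsing : ν x ({(⟨b x, hbB⟩ : B)} : Set B) = 1 := by
        have hset : ({(⟨b x, hbB⟩ : B)} : Set B) = S := by
          ext z
          simp [hS, Subtype.ext_iff, eq_comm]
        rw [hset]
        exact hS1
      exact aux_eq_dirac_of_singleton (ν x) hsing
    set v : α → (Fin m → ℝ) := fun x => if b x ∈ B then b x else hBne.some with hv
    have hvB : ∀ x, v x ∈ B := by
      intro x
      by_cases h : b x ∈ B
      · simpa [hv, h]
      · simpa [hv, h] using hBne.some_mem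
    have hvmeas : Measurable v :=
      Measurable.ite (hbmeas hB.isClosed.measurableSet) hbmeas measurable_const
    refine ⟨fun x => ⟨v x, hvB x⟩, hvmeas.subtype_mk, ?_⟩
    filter_upwards [hkey] with x hx
    obtain ⟨hbB, heq⟩ := hx
    rw [heq]
    congr 1
    exact Subtype.ext (by simp [hv, hbB])
  · rintro ⟨u, humeas, hu⟩
    refine ⟨hν, fun ν₁ ν₂ h1 h2 hmid => ?_⟩
    filter_upwards [hu, hmid, h1.2, h2.2] with x hux hmx hp1 hp2
    rw [hux] at hmx
    have e1 : ν₁ x = Measure.dirac (u x) := aux_eq_dirac_of_half _ _ hmx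
    have e2 : ν₂ x = Measure.dirac (u x) := by
      rw [add_comm] at hmx
      exact aux_eq_dirac_of_half _ _ hmx
    rw [e1, e2]
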